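/- arXiv:1202.6320 — 4 statements merged into one kernel-verified Lean document; each statement's English description precedes it below -/
import Mathlib

section
/- Let M be a compact topological space with a finite Borel measure μ of total mass V = μ(M) > 0, let φ₁, φ₂, … : M → ℂ be continuous functions each with ∫_M φₙ dμ = 0 and ∫_M |φₙ|² dμ = 1, and let a₁, a₂, … be positive reals such that Σₙ |φₙ(x)|² aₙ converges uniformly on M. Then for every N ≥ 1 there exists a point (x̄₁, …, x̄_N) ∈ M^N with Σ_{n=1}^∞ |φₙ(x̄₁) + ⋯ + φₙ(x̄_N)|² aₙ ≤ (N/V) · Σ_{n=1}^∞ aₙ. -/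
open MeasureTheory

/-- On a compact space `M` with a finite Borel measure `μ` of total mass
`V = μ(M) > 0`, given continuous `φₙ : M → ℂ` with `∫ φₙ = 0`, `∫ ‖φₙ‖² = 1`, and positive
reals `aₙ` with `Σₙ ‖φₙ(x)‖² aₙ` uniformly convergent on `M`, for every `N ≥ 1` there is a
point `(x̄₁, …, x̄_N) ∈ M^N` with `Σₙ ‖φₙ(x̄₁) + ⋯ + φₙ(x̄_N)‖² aₙ ≤ (N/V) · Σₙ aₙ`. -/
theorem exists_point_tsum_le {M : Type*} [TopologicalSpace M] [CompactSpace M]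
    [MeasurableSpace M] [BorelSpace M] (μ : Measure M) [IsFiniteMeasure μ]
    (V : ℝ) (hV : V = (μ Set.univ).toReal) (hVpos : 0 < V)
    (φ : ℕ → M → ℂ) (hφ : ∀ n, Continuous (φ n))
    (hmean : ∀ n, ∫ x, φ n x ∂μ = 0) (hnorm : ∀ n, ∫ x, ‖φ n x‖ ^ 2 ∂μ = 1)
    (a : ℕ → ℝ) (ha : ∀ n, 0 < a n)
    (hsummable : ∀ x : M, Summable fun n => ‖φ n x‖ ^ 2 * a n)
    (hunif : TendstoUniformly
      (fun s : ℕ => fun x : M => ∑ n ∈ Finset.range s, ‖φ n x‖ ^ 2 * a n)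
      (fun x : M => ∑' n, ‖φ n x‖ ^ 2 * a n) Filter.atTop)
    (N : ℕ) (hN : 1 ≤ N) :
    ∃ p : Fin N → M,
      (∑' n, ‖∑ i, φ n (p i)‖ ^ 2 * a n) ≤ ((N : ℝ) / V) * ∑' n, a n := by
  classical
  have hVne : V ≠ 0 := ne_of_gt hVpos
  have hμuniv : μ Set.univ ≠ 0 := by
    intro h
    rw [hV, h] at hVpos
    simp at hVpos
  -- integrability of continuous functions
  have hintC : ∀ f : M → ℂ, Continuous f → Integrable f μ := fun f hf =>
    integrableOn_univ.mp (hf.locallyIntegrable.integrableOn_isCompact isCompact_univ)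
  have hintR : ∀ f : M → ℝ, Continuous f → Integrable f μ := fun f hf =>
    integrableOn_univ.mp (hf.locallyIntegrable.integrableOn_isCompact isCompact_univ)
  -- the series of a is summable
  have hGc : Continuous (fun x => ∑' n, ‖φ n x‖ ^ 2 * a n) := by
    apply hunif.continuous
    refine Filter.Eventually.frequently ?_
    filter_upwards with s
    exact continuous_finset_sum _ fun n _ => ((hφ n).norm.pow 2).mul continuous_const
  have hsa : Summable a := by
    apply summable_of_sum_range_le (c := ∫ x, (∑' n, ‖φ n x‖ ^ 2 * a n) ∂μ)
      (fun n => (ha n).le)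
    intro s
    have h1 : ∑ n ∈ Finset.range s, a n
        = ∫ x, ∑ n ∈ Finset.range s, ‖φ n x‖ ^ 2 * a n ∂μ := by
      rw [integral_finset_sum _ (f := fun n x => ‖φ n x‖ ^ 2 * a n) (fun n _ =>
        (hintR _ (((hφ n).norm.pow 2).mul continuous_const)))]
      refine (Finset.sum_congr rfl fun n _ => ?_).symm
      rw [integral_mul_const, hnorm n, one_mul]
    rw [h1]
    refine integral_mono
      (hintR _ (continuous_finset_sum _ fun n _ => ((hφ n).norm.pow 2).mul continuous_const))
      (hintR _ hGc) (fun x => ?_)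
    exact Summable.sum_le_tsum _ (fun n _ => mul_nonneg (pow_nonneg (norm_nonneg _) 2) (ha n).le)
      (hsummable x)
  -- summability of the main series for any tuple of points
  have hsumm : ∀ (m : ℕ) (p : Fin m → M),
      Summable (fun n => ‖∑ i, φ n (p i)‖ ^ 2 * a n) := by
    intro m p
    refine Summable.of_nonneg_of_le
      (fun n => mul_nonneg (pow_nonneg (norm_nonneg _) 2) (ha n).le)
      (fun n => ?_) (((summable_sum (fun i (_ : i ∈ Finset.univ) =>
        hsummable (p i)))).mul_left (m : ℝ))
    have h1 : ‖∑ i, φ n (p i)‖ ^ 2 ≤ (∑ i, ‖φ n (p i)‖) ^ 2 :=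
      pow_le_pow_left₀ (norm_nonneg _) (norm_sum_le _ _) 2
    have h2 : (∑ i, ‖φ n (p i)‖) ^ 2 ≤ (m : ℝ) * ∑ i, ‖φ n (p i)‖ ^ 2 := by
      have := sq_sum_le_card_mul_sum_sq (s := (Finset.univ : Finset (Fin m)))
        (f := fun i => ‖φ n (p i)‖)
      simpa using this
    calc ‖∑ i, φ n (p i)‖ ^ 2 * a n
        ≤ ((m : ℝ) * ∑ i, ‖φ n (p i)‖ ^ 2) * a n :=
          mul_le_mul_of_nonneg_right (h1.trans h2) (ha n).le
      _ = (m : ℝ) * ∑ i, ‖φ n (p i)‖ ^ 2 * a n := by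
          rw [mul_assoc, Finset.sum_mul]
  -- Main claim, for all m by induction
  suffices H : ∀ m : ℕ, ∃ p : Fin m → M,
      (∑' n, ‖∑ i, φ n (p i)‖ ^ 2 * a n) ≤ ((m : ℝ) / V) * ∑' n, a n from H N
  intro m
  induction m with
  | zero => exact ⟨Fin.elim0, by simp⟩
  | succ k ih =>
    obtain ⟨p, hp⟩ := ih
    set S : ℕ → ℂ := fun n => ∑ i, φ n (p i) with hS
    have hb : Summable (fun n => ‖S n‖ ^ 2 * a n) := hsumm k p
    set f : ℕ → M → ℝ := fun n x => ‖S n + φ n x‖ ^ 2 * a n with hf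
    have hfc : ∀ n, Continuous (f n) := fun n =>
      ((continuous_const.add (hφ n)).norm.pow 2).mul continuous_const
    have hfpos : ∀ n x, 0 ≤ f n x := fun n x =>
      mul_nonneg (pow_nonneg (norm_nonneg _) 2) (ha n).le
    have hcons : ∀ n (x : M), ∑ i, φ n ((Fin.cons x p : Fin (k + 1) → M) i) = S n + φ n x := by
      intro n x
      rw [Fin.sum_univ_succ]
      simp only [Fin.cons_zero, Fin.cons_succ]
      rw [add_comm]
    have hfs : ∀ x : M, Summable (fun n => f n x) := fun x =>
      (hsumm (k + 1) ((Fin.cons x p : Fin (k + 1) → M))).congr (fun n => by rw [hcons n x])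
    -- the integral of each term
    have hfint : ∀ n, ∫ x, f n x ∂μ = (‖S n‖ ^ 2 * V + 1) * a n := by
      intro n
      have hnormadd : ∀ x : M, ‖S n + φ n x‖ ^ 2
          = ‖S n‖ ^ 2 + ‖φ n x‖ ^ 2 + 2 * (S n * (starRingEnd ℂ) (φ n x)).re := by
        intro x
        have h := Complex.normSq_add (S n) (φ n x)
        simpa [← Complex.sq_norm] using h
      have hconjc : Continuous (fun x => S n * (starRingEnd ℂ) (φ n x)) :=
        continuous_const.mul (Complex.continuous_conj.comp (hφ n))
      have hre0 : ∫ x, (S n * (starRingEnd ℂ) (φ n x)).re ∂μ = 0 := by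
        have h1 : ∫ x, S n * (starRingEnd ℂ) (φ n x) ∂μ = 0 := by
          rw [integral_const_mul, integral_conj, hmean n, map_zero, mul_zero]
        have h2 := integral_re (μ := μ) (f := fun x => S n * (starRingEnd ℂ) (φ n x))
          (hintC _ hconjc)
        rw [h1] at h2
        simpa using h2
      calc ∫ x, f n x ∂μ
          = ∫ x, (‖S n‖ ^ 2 + ‖φ n x‖ ^ 2 + 2 * (S n * (starRingEnd ℂ) (φ n x)).re) * a n ∂μ := by
            refine integral_congr_ae (Filter.Eventually.of_forall fun x => ?_)
            rw [hf]
            simp only [hnormadd x]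
        _ = (∫ x, (‖S n‖ ^ 2 + ‖φ n x‖ ^ 2 + 2 * (S n * (starRingEnd ℂ) (φ n x)).re) ∂μ) * a n := by
            rw [integral_mul_const]
        _ = (‖S n‖ ^ 2 * V + 1) * a n := by
            have i1 : Integrable (fun x : M => ‖S n‖ ^ 2 + ‖φ n x‖ ^ 2) μ :=
              hintR _ (by fun_prop)
            have i2 : Integrable (fun x : M => 2 * (S n * (starRingEnd ℂ) (φ n x)).re) μ :=
              hintR _ (continuous_const.mul (Complex.continuous_re.comp hconjc))
            have i3 : Integrable (fun x : M => ‖φ n x‖ ^ 2) μ := hintR _ (by fun_prop)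
            rw [integral_add i1 i2, integral_add (integrable_const _) i3,
               integral_const, smul_eq_mul, measureReal_def, ← hV, integral_const_mul, hre0, hnorm n]
            ring
    have hfintsum : Summable (fun n => (‖S n‖ ^ 2 * V + 1) * a n) := by
      refine Summable.congr (f := fun n => (‖S n‖ ^ 2 * a n) * V + a n) ?_ (fun n => by ring)
      exact (hb.mul_right V).add hsa
    have htsumint : ∑' n, (‖S n‖ ^ 2 * V + 1) * a n
        = (∑' n, ‖S n‖ ^ 2 * a n) * V + ∑' n, a n := by
      rw [show (fun n => (‖S n‖ ^ 2 * V + 1) * a n)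
            = fun n => (‖S n‖ ^ 2 * a n) * V + a n from funext fun n => by ring,
          Summable.tsum_add (hb.mul_right V) hsa, tsum_mul_right]
    set g : M → ℝ := fun x => ∑' n, f n x with hg
    have hgpos : ∀ x, 0 ≤ g x := fun x => tsum_nonneg (fun n => hfpos n x)
    have hgeq : ∀ x, g x = (∑' n, ENNReal.ofReal (f n x)).toReal := by
      intro x
      rw [← ENNReal.ofReal_tsum_of_nonneg (fun n => hfpos n x) (hfs x),
        ENNReal.toReal_ofReal (hgpos x)]
    have hgm : Measurable g := by
      have h1 : g = fun x => (∑' n, ENNReal.ofReal (f n x)).toReal := funext hgeq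
      rw [h1]
      exact (Measurable.ennreal_tsum fun n => (hfc n).measurable.ennreal_ofReal).ennreal_toReal
    have hlintf : ∀ n, ∫⁻ x, ENNReal.ofReal (f n x) ∂μ
        = ENNReal.ofReal ((‖S n‖ ^ 2 * V + 1) * a n) := by
      intro n
      rw [← ofReal_integral_eq_lintegral_ofReal (hintR _ (hfc n))
        (Filter.Eventually.of_forall (hfpos n)), hfint n]
    have hfintnn : ∀ n, 0 ≤ (‖S n‖ ^ 2 * V + 1) * a n := fun n =>
      mul_nonneg (add_nonneg (mul_nonneg (pow_nonneg (norm_nonneg _) 2) hVpos.le) zero_le_one)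
        (ha n).le
    have hlintg : ∫⁻ x, ENNReal.ofReal (g x) ∂μ
        = ENNReal.ofReal (∑' n, (‖S n‖ ^ 2 * V + 1) * a n) := by
      calc ∫⁻ x, ENNReal.ofReal (g x) ∂μ
          = ∫⁻ x, ∑' n, ENNReal.ofReal (f n x) ∂μ := by
            refine lintegral_congr fun x => ?_
            rw [← ENNReal.ofReal_tsum_of_nonneg (fun n => hfpos n x) (hfs x)]
        _ = ∑' n, ∫⁻ x, ENNReal.ofReal (f n x) ∂μ :=
            lintegral_tsum (fun n => ((hfc n).measurable.ennreal_ofReal).aemeasurable)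
        _ = ∑' n, ENNReal.ofReal ((‖S n‖ ^ 2 * V + 1) * a n) := by
            exact tsum_congr hlintf
        _ = ENNReal.ofReal (∑' n, (‖S n‖ ^ 2 * V + 1) * a n) :=
            (ENNReal.ofReal_tsum_of_nonneg hfintnn hfintsum).symm
    have hgi : Integrable g μ := by
      refine ⟨hgm.aestronglyMeasurable, ?_⟩
      rw [hasFiniteIntegral_iff_norm]
      have h1 : ∀ x, ENNReal.ofReal ‖g x‖ = ENNReal.ofReal (g x) := fun x => by
        rw [Real.norm_of_nonneg (hgpos x)]
      calc ∫⁻ x, ENNReal.ofReal ‖g x‖ ∂μ = ∫⁻ x, ENNReal.ofReal (g x) ∂μ :=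
            lintegral_congr h1
        _ = ENNReal.ofReal (∑' n, (‖S n‖ ^ 2 * V + 1) * a n) := hlintg
        _ < ⊤ := ENNReal.ofReal_lt_top
    have hgint : ∫ x, g x ∂μ = (∑' n, ‖S n‖ ^ 2 * a n) * V + ∑' n, a n := by
      have hside : ∑' n, ∫⁻ x, ‖f n x‖₊ ∂μ ≠ ⊤ := by
        have h1 : ∀ n, (∫⁻ x, (‖f n x‖₊ : ENNReal) ∂μ)
            = ENNReal.ofReal ((‖S n‖ ^ 2 * V + 1) * a n) := by
          intro n
          rw [← hlintf n]
          refine lintegral_congr fun x => ?_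
          rw [← enorm_eq_nnnorm, ← ofReal_norm, Real.norm_of_nonneg (hfpos n x)]
        rw [tsum_congr h1, ← ENNReal.ofReal_tsum_of_nonneg hfintnn hfintsum]
        exact ENNReal.ofReal_ne_top
      rw [hg]
      rw [integral_tsum (fun n => (hfc n).aestronglyMeasurable) hside,
        tsum_congr hfint, htsumint]
    -- find a good point
    have hex : ∃ x : M, g x ≤ (∫ y, g y ∂μ) / V := by
      by_contra hcon
      push_neg at hcon
      have hpos : 0 < ∫ x, (g x - (∫ y, g y ∂μ) / V) ∂μ := by
        rw [integral_pos_iff_support_of_nonneg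
          (fun x => sub_nonneg.mpr (hcon x).le)
          (hgi.sub (integrable_const _))]
        have hsupp : Function.support (fun x => g x - (∫ y, g y ∂μ) / V) = Set.univ := by
          ext x
          simp only [Function.mem_support, Set.mem_univ, iff_true]
          exact ne_of_gt (sub_pos.mpr (hcon x))
        rw [hsupp]
        exact Measure.measure_univ_pos.mpr (fun h => hμuniv (by rw [h]; rfl))
      rw [integral_sub hgi (integrable_const _), integral_const, measureReal_def, ← hV, smul_eq_mul,
        mul_comm V ((∫ y, g y ∂μ) / V), div_mul_cancel₀ _ hVne, sub_self] at hpos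
      exact lt_irrefl _ hpos
    obtain ⟨x, hx⟩ := hex
    refine ⟨(Fin.cons x p : Fin (k + 1) → M), ?_⟩
    have heq : ∑' n, ‖∑ i, φ n ((Fin.cons x p : Fin (k + 1) → M) i)‖ ^ 2 * a n = g x :=
      tsum_congr fun n => by rw [hcons n x]
    rw [heq]
    refine hx.trans ?_
    rw [hgint]
    have hbound : ((∑' n, ‖S n‖ ^ 2 * a n) * V + ∑' n, a n) / V
        = (∑' n, ‖S n‖ ^ 2 * a n) + (1 / V) * ∑' n, a n := by
      field_simp
    rw [hbound]
    have hfin : ((k : ℝ) / V) * ∑' n, a n + (1 / V) * ∑' n, a n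
        = (((k + 1 : ℕ) : ℝ) / V) * ∑' n, a n := by
      push_cast
      ring
    calc (∑' n, ‖S n‖ ^ 2 * a n) + (1 / V) * ∑' n, a n
        ≤ ((k : ℝ) / V) * ∑' n, a n + (1 / V) * ∑' n, a n := by
          exact add_le_add_left hp _
      _ = (((k + 1 : ℕ) : ℝ) / V) * ∑' n, a n := hfin
end

section
/- Let M be a compact topological space with a finite Borel measure μ of total mass V = μ(M) > 0, let φ₁, φ₂, … : M → ℂ be continuous functions each with ∫_M φₙ dμ = 0 and ∫_M |φₙ|² dμ = 1, and let a₁, a₂, … be positive reals such that Σₙ |φₙ(x)|² aₙ converges uniformly on M. If (p₁, …, p_N) ∈ M^N globally minimizes the function F_N(x₁, …, x_N) = Σ_{n=1}^∞ |φₙ(x₁) + ⋯ + φₙ(x_N)|² aₙ on M^N, then Σ_{n=1}^∞ |φₙ(p₁) + ⋯ + φₙ(p_N)|² aₙ ≤ (N/V) · Σ_{n=1}^∞ aₙ. -/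
open MeasureTheory

lemma integrable_of_bound {α E : Type*} [MeasurableSpace α] [NormedAddCommGroup E]
    (μ : Measure α) [IsFiniteMeasure μ] {f : α → E} (hm : AEStronglyMeasurable f μ) (C : ℝ)
    (h : ∀ x, ‖f x‖ ≤ C) : Integrable f μ :=
  (integrable_const C).mono' hm (Filter.Eventually.of_forall h)

lemma keyA {M : Type*} [TopologicalSpace M] [CompactSpace M] [MeasureSpace M] [BorelSpace M]
    [IsFiniteMeasure (volume : Measure M)] (f : M → ℂ) (hf : Continuous f)
    (hmean : ∫ y, f y = 0) (hnorm : ∫ y, ‖f y‖ ^ 2 = 1) (N : ℕ) :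
    ∫ x : Fin N → M, ‖∑ i, f (x i)‖ ^ 2
      = N * ((volume : Measure M) Set.univ).toReal ^ (N - 1) := by
  classical
  haveI : SigmaFinite (volume : Measure M) := inferInstance
  set V : ℝ := ((volume : Measure M) Set.univ).toReal with hV
  have hMne : Nonempty M := by
    by_contra h
    rw [not_nonempty_iff] at h
    rw [integral_of_isEmpty] at hnorm
    exact one_ne_zero hnorm.symm
  obtain ⟨C, hC⟩ : ∃ C, ∀ y : M, ‖f y‖ ≤ C := by
    obtain ⟨C, hC⟩ := isCompact_univ.exists_bound_of_continuousOn hf.continuousOn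
    exact ⟨C, fun y => hC y trivial⟩
  have hC0 : 0 ≤ C := le_trans (norm_norm (f (Classical.arbitrary M)) ▸ norm_nonneg _) (hC _)
  have hmc : ∀ z : ℂ, z * (starRingEnd ℂ) z = ((‖z‖ ^ 2 : ℝ) : ℂ) := by
    intro z
    rw [Complex.mul_conj]
    norm_cast
    simp [Complex.normSq_eq_norm_sq]
  -- pair integrals
  have pair : ∀ i j : Fin N, (∫ x : Fin N → M, f (x i) * (starRingEnd ℂ) (f (x j)))
      = if i = j then ((V : ℂ) ^ (N - 1)) else 0 := by
    intro i j
    by_cases hij : i = j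
    · subst hij
      rw [if_pos rfl]
      set H : Fin N → M → ℂ :=
        fun k => if k = i then (fun y : M => f y * (starRingEnd ℂ) (f y))
          else (fun _ : M => (1 : ℂ)) with hH
      have h1 : (fun x : Fin N → M => f (x i) * (starRingEnd ℂ) (f (x i)))
          = fun x => ∏ k, H k (x k) := by
        funext x
        rw [Finset.prod_eq_single i (fun b _ hb => by simp [hH, hb])
          (fun h => absurd (Finset.mem_univ i) h)]
        simp [hH]
      rw [h1, MeasureTheory.integral_fintype_prod_volume_eq_prod (ι := Fin N) H]
      have hfactor : ∀ k, (∫ y, H k y) = if k = i then 1 else (V : ℂ) := by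
        intro k
        by_cases hk : k = i
        · subst hk
          rw [if_pos rfl]
          simp only [hH, if_pos rfl]
          calc ∫ y, f y * (starRingEnd ℂ) (f y) = ∫ y, ((‖f y‖ ^ 2 : ℝ) : ℂ) := by
                simp_rw [hmc]
            _ = ((∫ y, ‖f y‖ ^ 2 : ℝ) : ℂ) := integral_ofReal
            _ = 1 := by rw [hnorm]; norm_num
        · rw [if_neg hk]
          simp only [hH, if_neg hk]
          rw [integral_const]
          simp [hV, measureReal_def]
      simp_rw [hfactor]
      rw [← Finset.mul_prod_erase Finset.univ _ (Finset.mem_univ i), if_pos rfl, one_mul,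
        Finset.prod_congr rfl (fun k hk => if_neg (Finset.ne_of_mem_erase hk)),
        Finset.prod_const, Finset.card_erase_of_mem (Finset.mem_univ i), Finset.card_univ,
        Fintype.card_fin]
    · rw [if_neg hij]
      set H : Fin N → M → ℂ :=
        fun k => if k = i then f else if k = j then (fun y : M => (starRingEnd ℂ) (f y))
          else (fun _ : M => (1 : ℂ)) with hH
      have h1 : (fun x : Fin N → M => f (x i) * (starRingEnd ℂ) (f (x j)))
          = fun x => ∏ k, H k (x k) := by
        funext x
        rw [← Finset.mul_prod_erase Finset.univ _ (Finset.mem_univ i),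
          ← Finset.mul_prod_erase _ _
            (Finset.mem_erase.mpr ⟨Ne.symm hij, Finset.mem_univ j⟩),
          Finset.prod_eq_one (fun k hk => ?_)]
        · simp only [hH, if_pos rfl, if_neg (Ne.symm hij)]
          simp
        · obtain ⟨hkj, hki, -⟩ : k ≠ j ∧ k ≠ i ∧ True := by
            have h2 := Finset.mem_erase.mp hk
            have h3 := Finset.mem_erase.mp h2.2
            exact ⟨h2.1, h3.1, trivial⟩
          simp [hH, hki, hkj]
      rw [h1, MeasureTheory.integral_fintype_prod_volume_eq_prod (ι := Fin N) H]
      refine Finset.prod_eq_zero (Finset.mem_univ i) ?_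
      simp only [hH, if_pos rfl]
      exact hmean
  -- integrability of pair integrands
  have hint : ∀ i j : Fin N,
      Integrable (fun x : Fin N → M => f (x i) * (starRingEnd ℂ) (f (x j))) := by
    intro i j
    refine integrable_of_bound _ ?_ (C * C) (fun x => ?_)
    · exact ((hf.measurable.comp (measurable_pi_apply i)).mul
        (continuous_star.measurable.comp
          (hf.measurable.comp (measurable_pi_apply j)))).aestronglyMeasurable
    · rw [norm_mul, RCLike.norm_conj]
      exact mul_le_mul (hC _) (hC _) (norm_nonneg _) hC0
  have expand : ∀ x : Fin N → M, (‖∑ i, f (x i)‖ ^ 2 : ℝ)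
      = ∑ i, ∑ j, (f (x i) * (starRingEnd ℂ) (f (x j))).re := by
    intro x
    have h1 : ((∑ i, f (x i)) * (starRingEnd ℂ) (∑ j, f (x j)))
        = ∑ i, ∑ j, f (x i) * (starRingEnd ℂ) (f (x j)) := by
      rw [map_sum, Finset.sum_mul_sum]
    have h2 := hmc (∑ i, f (x i))
    rw [h1] at h2
    have h3 := congrArg Complex.re h2
    rw [Complex.ofReal_re] at h3
    rw [← h3, Complex.re_sum]
    exact Finset.sum_congr rfl fun i _ => Complex.re_sum _ _
  calc ∫ x : Fin N → M, ‖∑ i, f (x i)‖ ^ 2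
      = ∫ x : Fin N → M, ∑ i, ∑ j, (f (x i) * (starRingEnd ℂ) (f (x j))).re := by
        simp_rw [expand]
    _ = ∑ i, ∑ j, (∫ x : Fin N → M, f (x i) * (starRingEnd ℂ) (f (x j))).re := by
        simp only [← RCLike.re_to_complex]
        rw [integral_finset_sum _ (fun i _ => integrable_finset_sum _
          (fun j _ => (hint i j).re))]
        refine Finset.sum_congr rfl fun i _ => ?_
        rw [integral_finset_sum _ (fun j _ => (hint i j).re)]
        exact Finset.sum_congr rfl fun j _ => integral_re (hint i j)
    _ = ∑ i : Fin N, (V : ℝ) ^ (N - 1) := by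
        refine Finset.sum_congr rfl fun i _ => ?_
        simp_rw [pair, apply_ite Complex.re, Complex.zero_re]
        rw [Finset.sum_ite_eq Finset.univ i fun _ => ((V : ℂ) ^ (N - 1)).re]
        simp [← Complex.ofReal_pow]
    _ = N * V ^ (N - 1) := by
        rw [Finset.sum_const, Finset.card_univ, Fintype.card_fin, nsmul_eq_mul]


/-- On a compact space `M` with a finite Borel measure `μ` of total mass
`V = μ(M) > 0`, given continuous `φₙ : M → ℂ` with `∫ φₙ = 0`, `∫ ‖φₙ‖² = 1`, and positive
reals `aₙ` with `Σₙ ‖φₙ(x)‖² aₙ` uniformly convergent on `M`: if `(p₁, …, p_N) ∈ M^N`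
globally minimizes `F_N(x₁, …, x_N) = Σₙ ‖φₙ(x₁) + ⋯ + φₙ(x_N)‖² aₙ`, then
`Σₙ ‖φₙ(p₁) + ⋯ + φₙ(p_N)‖² aₙ ≤ (N/V) · Σₙ aₙ`. -/
theorem tsum_le_of_min {M : Type*} [TopologicalSpace M] [CompactSpace M]
    [MeasurableSpace M] [BorelSpace M] (μ : Measure M) [IsFiniteMeasure μ]
    (V : ℝ) (hV : V = (μ Set.univ).toReal) (hVpos : 0 < V)
    (φ : ℕ → M → ℂ) (hφ : ∀ n, Continuous (φ n))
    (hmean : ∀ n, ∫ x, φ n x ∂μ = 0) (hnorm : ∀ n, ∫ x, ‖φ n x‖ ^ 2 ∂μ = 1)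
    (a : ℕ → ℝ) (ha : ∀ n, 0 < a n)
    (hsummable : ∀ x : M, Summable fun n => ‖φ n x‖ ^ 2 * a n)
    (hunif : TendstoUniformly
      (fun s : ℕ => fun x : M => ∑ n ∈ Finset.range s, ‖φ n x‖ ^ 2 * a n)
      (fun x : M => ∑' n, ‖φ n x‖ ^ 2 * a n) Filter.atTop)
    (N : ℕ) (hN : 1 ≤ N) (p : Fin N → M)
    (hmin : ∀ x : Fin N → M,
      (∑' n, ‖∑ i, φ n (p i)‖ ^ 2 * a n) ≤ ∑' n, ‖∑ i, φ n (x i)‖ ^ 2 * a n) :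
    (∑' n, ‖∑ i, φ n (p i)‖ ^ 2 * a n) ≤ ((N : ℝ) / V) * ∑' n, a n := by
  classical
  letI : MeasureSpace M := ⟨μ⟩
  haveI : IsFiniteMeasure (volume : Measure M) := ‹IsFiniteMeasure μ›
  have hMne : Nonempty M := ⟨p ⟨0, hN⟩⟩
  have hVvol : ((volume : Measure M) Set.univ).toReal = V := by rw [hV]; rfl
  -- the one-variable majorant G
  set G : M → ℝ := fun y => ∑' n, ‖φ n y‖ ^ 2 * a n with hGdef
  have hGcont : Continuous G := hunif.continuous
    (Filter.Eventually.frequently (Filter.Eventually.of_forall fun s =>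
      continuous_finset_sum _ fun n _ => ((hφ n).norm.pow 2).mul continuous_const))
  obtain ⟨CG, hCG⟩ : ∃ CG, ∀ y : M, ‖G y‖ ≤ CG := by
    obtain ⟨C, hC⟩ := isCompact_univ.exists_bound_of_continuousOn hGcont.continuousOn
    exact ⟨C, fun y => hC y trivial⟩
  have hGle : ∀ y : M, G y ≤ CG := fun y => (le_abs_self _).trans (Real.norm_eq_abs _ ▸ hCG y)
  have htnn : ∀ (n : ℕ) (y : M), 0 ≤ ‖φ n y‖ ^ 2 * a n := fun n y =>
    mul_nonneg (by positivity) (ha n).le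
  have htnn' : ∀ (n : ℕ) (x : Fin N → M), 0 ≤ ‖∑ i, φ n (x i)‖ ^ 2 * a n := fun n x =>
    mul_nonneg (by positivity) (ha n).le
  have htermG : ∀ (n : ℕ) (y : M), ‖φ n y‖ ^ 2 * a n ≤ G y := fun n y =>
    Summable.le_tsum (hsummable y) n fun m _ => htnn m y
  -- integrability of the one-variable pieces
  have hint_g : ∀ n, Integrable (fun y : M => ‖φ n y‖ ^ 2 * a n) μ := fun n =>
    integrable_of_bound μ (((hφ n).norm.pow 2).mul continuous_const).aestronglyMeasurable CG
      (fun y => by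
        rw [Real.norm_eq_abs, abs_of_nonneg (htnn n y)]
        exact (htermG n y).trans (hGle y))
  have hint_G : Integrable G μ :=
    integrable_of_bound μ hGcont.aestronglyMeasurable CG hCG
  -- summability of a
  have hsumA : Summable a := by
    refine summable_of_sum_range_le (fun n => (ha n).le) (c := ∫ y, G y ∂μ) (fun s => ?_)
    calc ∑ n ∈ Finset.range s, a n
        = ∫ y, ∑ n ∈ Finset.range s, ‖φ n y‖ ^ 2 * a n ∂μ := by
          rw [integral_finset_sum _ (fun n _ => hint_g n)]
          exact (Finset.sum_congr rfl fun n _ => by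
            rw [integral_mul_const, hnorm n, one_mul]).symm
      _ ≤ ∫ y, G y ∂μ := integral_mono (integrable_finset_sum _ fun n _ => hint_g n) hint_G
          (fun y => Summable.sum_le_tsum (Finset.range s) (fun n _ => htnn n y) (hsummable y))
  -- Cauchy-Schwarz bound
  have hCS : ∀ (n : ℕ) (x : Fin N → M),
      ‖∑ i, φ n (x i)‖ ^ 2 ≤ N * ∑ i, ‖φ n (x i)‖ ^ 2 := by
    intro n x
    calc ‖∑ i, φ n (x i)‖ ^ 2 ≤ (∑ i, ‖φ n (x i)‖) ^ 2 :=
          pow_le_pow_left₀ (norm_nonneg _) (norm_sum_le _ _) 2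
      _ ≤ (Finset.univ.card : ℝ) * ∑ i, ‖φ n (x i)‖ ^ 2 := sq_sum_le_card_mul_sum_sq
      _ = N * ∑ i, ‖φ n (x i)‖ ^ 2 := by rw [Finset.card_univ, Fintype.card_fin]
  have hptle : ∀ (n : ℕ) (x : Fin N → M),
      ‖∑ i, φ n (x i)‖ ^ 2 * a n ≤ N * ∑ i, ‖φ n (x i)‖ ^ 2 * a n := by
    intro n x
    refine le_trans (mul_le_mul_of_nonneg_right (hCS n x) (ha n).le) ?_
    rw [mul_assoc, Finset.sum_mul]
  have hsumGle : ∀ x : Fin N → M, ∑ i, G (x i) ≤ N * CG := by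
    intro x
    calc ∑ i, G (x i) ≤ ∑ _i : Fin N, CG := Finset.sum_le_sum fun i _ => hGle (x i)
      _ = N * CG := by rw [Finset.sum_const, Finset.card_univ, Fintype.card_fin, nsmul_eq_mul]
  -- summability of the N-variable series
  have hsumF : ∀ x : Fin N → M, Summable fun n => ‖∑ i, φ n (x i)‖ ^ 2 * a n := by
    intro x
    exact Summable.of_nonneg_of_le (fun n => htnn' n x) (fun n => hptle n x)
      ((summable_sum (fun i (_ : i ∈ Finset.univ) => hsummable (x i))).mul_left _)
  set F : (Fin N → M) → ℝ := fun x => ∑' n, ‖∑ i, φ n (x i)‖ ^ 2 * a n with hFdef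
  have hFle : ∀ x, F x ≤ N * ∑ i, G (x i) := by
    intro x
    calc F x ≤ ∑' n, (N : ℝ) * ∑ i, ‖φ n (x i)‖ ^ 2 * a n :=
          Summable.tsum_le_tsum (fun n => hptle n x) (hsumF x)
            ((summable_sum (fun i (_ : i ∈ Finset.univ) => hsummable (x i))).mul_left _)
      _ = N * ∑' n, ∑ i, ‖φ n (x i)‖ ^ 2 * a n := tsum_mul_left
      _ = N * ∑ i, G (x i) := by
          rw [Summable.tsum_finsetSum (fun i (_ : i ∈ Finset.univ) => hsummable (x i))]
  have hFnonneg : ∀ x, 0 ≤ F x := fun x => tsum_nonneg fun n => htnn' n x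
  -- measurability and integrability over the product space
  have hSmeas : ∀ n, Measurable (fun x : Fin N → M => ‖∑ i, φ n (x i)‖ ^ 2 * a n) := by
    intro n
    have h1 : Measurable fun x : Fin N → M => ∑ i, φ n (x i) :=
      Finset.measurable_sum _ fun i _ => (hφ n).measurable.comp (measurable_pi_apply i)
    exact (h1.norm.pow_const 2).mul_const _
  have hFn_int : ∀ n,
      Integrable (fun x : Fin N → M => ‖∑ i, φ n (x i)‖ ^ 2 * a n)
        (volume : Measure (Fin N → M)) := by
    intro n
    refine integrable_of_bound _ (hSmeas n).aestronglyMeasurable ((N : ℝ) * (N * CG))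
      (fun x => ?_)
    rw [Real.norm_eq_abs, abs_of_nonneg (htnn' n x)]
    calc ‖∑ i, φ n (x i)‖ ^ 2 * a n ≤ N * ∑ i, ‖φ n (x i)‖ ^ 2 * a n := hptle n x
      _ ≤ N * ∑ i, G (x i) := by
          exact mul_le_mul_of_nonneg_left
            (Finset.sum_le_sum fun i _ => htermG n (x i)) (Nat.cast_nonneg N)
      _ ≤ N * (N * CG) := mul_le_mul_of_nonneg_left (hsumGle x) (Nat.cast_nonneg N)
  have hFmeas : AEStronglyMeasurable F (volume : Measure (Fin N → M)) := by
    refine aestronglyMeasurable_of_tendsto_ae Filter.atTop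
      (f := fun s (x : Fin N → M) => ∑ n ∈ Finset.range s, ‖∑ i, φ n (x i)‖ ^ 2 * a n)
      (fun s => ?_) ?_
    · exact (Finset.measurable_sum _ fun n _ => hSmeas n).aestronglyMeasurable
    · exact Filter.Eventually.of_forall fun x => (hsumF x).hasSum.tendsto_sum_nat
  have hFint : Integrable F (volume : Measure (Fin N → M)) :=
    integrable_of_bound _ hFmeas ((N : ℝ) * (N * CG)) (fun x => by
      rw [Real.norm_eq_abs, abs_of_nonneg (hFnonneg x)]
      exact (hFle x).trans (mul_le_mul_of_nonneg_left (hsumGle x) (Nat.cast_nonneg N)))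
  -- the key integral computation
  have hkey : ∀ n, ∫ x : Fin N → M, ‖∑ i, φ n (x i)‖ ^ 2 = (N : ℝ) * V ^ (N - 1) := by
    intro n
    have h1 := keyA (φ n) (hφ n) (hmean n) (hnorm n) N
    rwa [hVvol] at h1
  -- the value of the integral of F
  have hintF : ∫ x : Fin N → M, F x = ((N : ℝ) * V ^ (N - 1)) * ∑' n, a n := by
    have h1 := integral_tsum_of_summable_integral_norm
      (μ := (volume : Measure (Fin N → M)))
      (F := fun n (x : Fin N → M) => ‖∑ i, φ n (x i)‖ ^ 2 * a n) (fun n => hFn_int n) ?_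
    · rw [← h1]
      have h2 : ∀ n, ∫ x : Fin N → M, ‖∑ i, φ n (x i)‖ ^ 2 * a n
          = ((N : ℝ) * V ^ (N - 1)) * a n := by
        intro n
        rw [integral_mul_const, hkey n]
      simp_rw [h2]
      exact tsum_mul_left
    · have h3 : ∀ n, (∫ x : Fin N → M, ‖(‖∑ i, φ n (x i)‖ ^ 2 * a n)‖)
          = ((N : ℝ) * V ^ (N - 1)) * a n := by
        intro n
        have : (fun x : Fin N → M => ‖(‖∑ i, φ n (x i)‖ ^ 2 * a n)‖)
            = fun x : Fin N → M => ‖∑ i, φ n (x i)‖ ^ 2 * a n := by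
          funext x
          rw [Real.norm_eq_abs, abs_of_nonneg (htnn' n x)]
        rw [this, integral_mul_const, hkey n]
      simp_rw [h3]
      exact hsumA.mul_left _
  -- total mass of the product measure
  have hν : ((volume : Measure (Fin N → M)) Set.univ).toReal = V ^ N := by
    rw [MeasureTheory.volume_pi, Measure.pi_univ, ENNReal.toReal_prod]
    simp [hVvol]
  -- minimality gives the averaging bound
  have havg : V ^ N * F p ≤ ∫ x : Fin N → M, F x := by
    have h1 := integral_mono (μ := (volume : Measure (Fin N → M)))
      (integrable_const (F p)) hFint (fun x => hmin x)
    rwa [integral_const, measureReal_def, hν, smul_eq_mul] at h1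
  rw [hintF] at havg
  have hVN : (V : ℝ) ^ N = V ^ (N - 1) * V := by
    conv_lhs => rw [show N = (N - 1) + 1 from (Nat.succ_pred_eq_of_pos hN).symm]
    rw [pow_succ]
  have hfin : V ^ N * F p ≤ V ^ N * (((N : ℝ) / V) * ∑' n, a n) := by
    refine havg.trans (le_of_eq ?_)
    rw [hVN]
    field_simp
  exact le_of_mul_le_mul_left hfin (pow_pos hVpos N)
end

section
/- Let M be a compact topological space with a finite Borel measure μ of total mass V = μ(M) > 0, let φ₁, φ₂, … : M → ℂ be continuous functions each with ∫_M φₙ dμ = 0 and ∫_M |φₙ|² dμ = 1, and let a₁, a₂, … be positive reals such that Σₙ |φₙ(x)|² aₙ converges uniformly on M. If (p₁, …, p_N) ∈ M^N globally minimizes F_N(x₁, …, x_N) = Σ_{n=1}^∞ |φₙ(x₁) + ⋯ + φₙ(x_N)|² aₙ on M^N, then for every fixed index m one has (1/N) · |φ_m(p₁) + ⋯ + φ_m(p_N)| ≤ C(m)/√N, where C(m) = √( (1/(V·a_m)) · Σ_{n=1}^∞ aₙ ). -/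
open MeasureTheory

lemma cont_integrable {M : Type*} [TopologicalSpace M] [CompactSpace M]
    [MeasurableSpace M] [BorelSpace M] (μ : Measure M) [IsFiniteMeasure μ]
    {E : Type*} [NormedAddCommGroup E] {f : M → E} (hf : Continuous f) :
    Integrable f μ :=
  hf.integrable_of_hasCompactSupport (IsClosed.isCompact (isClosed_tsupport f))

lemma norm_add_sq_expand (T z : ℂ) :
    ‖T + z‖ ^ 2 = ‖T‖ ^ 2 + ‖z‖ ^ 2 + 2 * (T * (starRingEnd ℂ) z).re := by
  rw [← RCLike.normSq_eq_def' (K := ℂ), ← RCLike.normSq_eq_def' (K := ℂ),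
    ← RCLike.normSq_eq_def' (K := ℂ)]
  simpa using RCLike.normSq_add T z

lemma per_term_integral {M : Type*} [TopologicalSpace M] [CompactSpace M]
    [MeasurableSpace M] [BorelSpace M] (μ : Measure M) [IsFiniteMeasure μ]
    (V : ℝ) (hV : V = (μ Set.univ).toReal)
    (φ : M → ℂ) (hφ : Continuous φ) (hmean : ∫ x, φ x ∂μ = 0)
    (hnorm : ∫ x, ‖φ x‖ ^ 2 ∂μ = 1) (T : ℂ) :
    ∫ y, ‖T + φ y‖ ^ 2 ∂μ = V * ‖T‖ ^ 2 + 1 := by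
  have h1 : Integrable (fun y => ‖φ y‖ ^ 2) μ := cont_integrable μ (by fun_prop)
  have hc : Continuous fun y => T * (starRingEnd ℂ) (φ y) :=
    continuous_const.mul (Complex.continuous_conj.comp hφ)
  have h2 : Integrable (fun y => (T * (starRingEnd ℂ) (φ y)).re) μ :=
    cont_integrable μ (Complex.continuous_re.comp hc)
  have h3 : Integrable (fun _ : M => ‖T‖ ^ 2) μ := integrable_const _
  have hre : ∫ y, (T * (starRingEnd ℂ) (φ y)).re ∂μ = 0 := by
    have hint : Integrable (fun y => T * (starRingEnd ℂ) (φ y)) μ :=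
      cont_integrable μ hc
    have h := integral_re (𝕜 := ℂ) hint
    simp only [RCLike.re_to_complex] at h
    rw [h, MeasureTheory.integral_const_mul, integral_conj, hmean]
    simp
  simp_rw [norm_add_sq_expand]
  have h4 : Integrable (fun y => ‖T‖ ^ 2 + ‖φ y‖ ^ 2) μ := h3.add h1
  rw [integral_add h4 (h2.const_mul 2), integral_add h3 h1,
    MeasureTheory.integral_const_mul, hre, integral_const, hnorm]
  simp [hV, mul_comm, measureReal_def]

-- summability of a
lemma a_summable {M : Type*} [TopologicalSpace M] [CompactSpace M]
    [MeasurableSpace M] [BorelSpace M] (μ : Measure M) [IsFiniteMeasure μ]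
    (hμ0 : μ ≠ 0)
    (φ : ℕ → M → ℂ) (hφ : ∀ n, Continuous (φ n))
    (hnorm : ∀ n, ∫ x, ‖φ n x‖ ^ 2 ∂μ = 1)
    (a : ℕ → ℝ) (ha : ∀ n, 0 < a n)
    (hsummable : ∀ x : M, Summable fun n => ‖φ n x‖ ^ 2 * a n)
    (hgc : Continuous fun x : M => ∑' n, ‖φ n x‖ ^ 2 * a n) :
    Summable a := by
  -- bound on g
  have hne : Nonempty M := by
    rcases isEmpty_or_nonempty M with h | h
    · exact absurd (Measure.eq_zero_of_isEmpty μ) hμ0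
    · exact h
  obtain ⟨x₀, -, hx₀⟩ := isCompact_univ.exists_isMaxOn Set.univ_nonempty
    hgc.continuousOn
  set C : ℝ := ∑' n, ‖φ n x₀‖ ^ 2 * a n with hC
  have hgle : ∀ x : M, (∑' n, ‖φ n x‖ ^ 2 * a n) ≤ C := fun x => hx₀ (Set.mem_univ x)
  -- lintegral computation
  have hmeas : ∀ n, Measurable fun x => ENNReal.ofReal (‖φ n x‖ ^ 2 * a n) :=
    fun n => (((hφ n).norm.pow 2).mul continuous_const).measurable.ennreal_ofReal
  have hterm : ∀ n, ∫⁻ x, ENNReal.ofReal (‖φ n x‖ ^ 2 * a n) ∂μ = ENNReal.ofReal (a n) := by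
    intro n
    rw [← ofReal_integral_eq_lintegral_ofReal
      ((cont_integrable μ (f := fun x => ‖φ n x‖ ^ 2) ((hφ n).norm.pow 2)).mul_const (a n))
      (Filter.Eventually.of_forall fun x => mul_nonneg (by positivity) (ha n).le)]
    congr 1
    rw [MeasureTheory.integral_mul_const, hnorm n, one_mul]
  have hkey : ∑' n, ENNReal.ofReal (a n) ≠ ⊤ := by
    have h1 : ∑' n, ENNReal.ofReal (a n)
        = ∫⁻ x, ∑' n, ENNReal.ofReal (‖φ n x‖ ^ 2 * a n) ∂μ := by
      calc ∑' n, ENNReal.ofReal (a n)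
          = ∑' n, ∫⁻ x, ENNReal.ofReal (‖φ n x‖ ^ 2 * a n) ∂μ :=
            tsum_congr fun n => (hterm n).symm
        _ = _ := (lintegral_tsum fun n => (hmeas n).aemeasurable).symm
    have h2 : ∀ x : M, ∑' n, ENNReal.ofReal (‖φ n x‖ ^ 2 * a n) ≤ ENNReal.ofReal C := by
      intro x
      rw [← ENNReal.ofReal_tsum_of_nonneg
        (fun n => mul_nonneg (by positivity) (ha n).le) (hsummable x)]
      exact ENNReal.ofReal_le_ofReal (hgle x)
    rw [h1]
    refine ne_top_of_le_ne_top ?_ (lintegral_mono h2)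
    rw [lintegral_const]
    exact ENNReal.mul_ne_top ENNReal.ofReal_ne_top (measure_ne_top μ _)
  have := ENNReal.summable_toReal hkey
  refine this.congr fun n => ?_
  rw [ENNReal.toReal_ofReal (ha n).le]

lemma tuple_summable {M : Type*} (φ : ℕ → M → ℂ) (a : ℕ → ℝ) (ha : ∀ n, 0 < a n)
    (hsummable : ∀ x : M, Summable fun n => ‖φ n x‖ ^ 2 * a n)
    {k : ℕ} (q : Fin k → M) :
    Summable fun n => ‖∑ i, φ n (q i)‖ ^ 2 * a n := by
  refine Summable.of_nonneg_of_le (fun n => mul_nonneg (by positivity) (ha n).le)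
    (fun n => ?_) (summable_sum fun i (_ : i ∈ Finset.univ) =>
      ((hsummable (q i)).mul_left (k : ℝ)))
  have h1 : ‖∑ i, φ n (q i)‖ ≤ ∑ i, ‖φ n (q i)‖ := norm_sum_le _ _
  have h2 : (∑ i, ‖φ n (q i)‖) ^ 2 ≤ (k : ℝ) * ∑ i, ‖φ n (q i)‖ ^ 2 := by
    simpa using sq_sum_le_card_mul_sum_sq (s := (Finset.univ : Finset (Fin k)))
      (f := fun i => ‖φ n (q i)‖)
  calc ‖∑ i, φ n (q i)‖ ^ 2 * a n ≤ ((∑ i, ‖φ n (q i)‖) ^ 2) * a n := by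
        apply mul_le_mul_of_nonneg_right _ (ha n).le
        exact pow_le_pow_left₀ (norm_nonneg _) h1 2
    _ ≤ ((k : ℝ) * ∑ i, ‖φ n (q i)‖ ^ 2) * a n :=
        mul_le_mul_of_nonneg_right h2 (ha n).le
    _ = ∑ i, (k : ℝ) * (‖φ n (q i)‖ ^ 2 * a n) := by
        rw [Finset.mul_sum, Finset.sum_mul]
        exact Finset.sum_congr rfl fun i _ => mul_assoc _ _ _

lemma step_lemma {M : Type*} [TopologicalSpace M] [CompactSpace M]
    [MeasurableSpace M] [BorelSpace M] (μ : Measure M) [IsFiniteMeasure μ]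
    (V : ℝ) (hV : V = (μ Set.univ).toReal) (hVpos : 0 < V)
    (φ : ℕ → M → ℂ) (hφ : ∀ n, Continuous (φ n))
    (hmean : ∀ n, ∫ x, φ n x ∂μ = 0) (hnorm : ∀ n, ∫ x, ‖φ n x‖ ^ 2 ∂μ = 1)
    (a : ℕ → ℝ) (ha : ∀ n, 0 < a n)
    (hsummable : ∀ x : M, Summable fun n => ‖φ n x‖ ^ 2 * a n)
    (hgc : Continuous fun x : M => ∑' n, ‖φ n x‖ ^ 2 * a n)
    (ha_sum : Summable a)
    (T : ℕ → ℂ) (hT : Summable fun n => ‖T n‖ ^ 2 * a n) :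
    ∃ y : M, (∑' n, ‖T n + φ n y‖ ^ 2 * a n)
      ≤ (∑' n, ‖T n‖ ^ 2 * a n) + (∑' n, a n) / V := by
  have hμ0 : μ ≠ 0 := by
    intro h
    rw [h] at hV
    simp at hV
    exact absurd hV hVpos.ne'
  have hne : Nonempty M := by
    rcases isEmpty_or_nonempty M with h | h
    · exact absurd (Measure.eq_zero_of_isEmpty μ) hμ0
    · exact h
  set B : ℝ := ∑' n, ‖T n‖ ^ 2 * a n with hB
  set A : ℝ := ∑' n, a n with hA
  set f : M → ℝ := fun y => ∑' n, ‖T n + φ n y‖ ^ 2 * a n with hf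
  set F : ℕ → M → ℝ := fun n y => ‖T n + φ n y‖ ^ 2 * a n with hFdef
  have hFcont : ∀ n, Continuous (F n) :=
    fun n => (((continuous_const.add (hφ n)).norm.pow 2).mul continuous_const)
  have hF_int : ∀ n, Integrable (F n) μ := fun n => cont_integrable μ (hFcont n)
  have hF_nonneg : ∀ n y, 0 ≤ F n y :=
    fun n y => mul_nonneg (by positivity) (ha n).le
  have hterm : ∀ n, ∫ y, F n y ∂μ = (V * ‖T n‖ ^ 2 + 1) * a n := by
    intro n
    rw [hFdef]
    simp only
    rw [MeasureTheory.integral_mul_const,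
      per_term_integral μ V hV (φ n) (hφ n) (hmean n) (hnorm n) (T n)]
  have hsum_int : Summable fun n => (V * ‖T n‖ ^ 2 + 1) * a n := by
    refine ((hT.mul_left V).add ha_sum).congr fun n => ?_
    ring
  -- pointwise summability and bound
  have hptb : ∀ n (y : M), F n y ≤ 2 * (‖T n‖ ^ 2 * a n) + 2 * (‖φ n y‖ ^ 2 * a n) := by
    intro n y
    have h1 : ‖T n + φ n y‖ ≤ ‖T n‖ + ‖φ n y‖ := norm_add_le _ _
    have h2 : ‖T n + φ n y‖ ^ 2 ≤ 2 * ‖T n‖ ^ 2 + 2 * ‖φ n y‖ ^ 2 := by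
      nlinarith [norm_nonneg (T n + φ n y), norm_nonneg (T n), norm_nonneg (φ n y),
        sq_nonneg (‖T n‖ - ‖φ n y‖)]
    calc F n y ≤ (2 * ‖T n‖ ^ 2 + 2 * ‖φ n y‖ ^ 2) * a n :=
          mul_le_mul_of_nonneg_right h2 (ha n).le
      _ = 2 * (‖T n‖ ^ 2 * a n) + 2 * (‖φ n y‖ ^ 2 * a n) := by ring
  have hpt : ∀ y : M, Summable fun n => F n y := fun y =>
    Summable.of_nonneg_of_le (fun n => hF_nonneg n y) (fun n => hptb n y)
      ((hT.mul_left 2).add ((hsummable y).mul_left 2))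
  -- the integral identity
  have hI : ∫ y, f y ∂μ = V * B + A := by
    rw [hf]
    rw [← integral_tsum_of_summable_integral_norm hF_int ?_]
    · have : ∀ n, ∫ y, F n y ∂μ = V * (‖T n‖ ^ 2 * a n) + a n := by
        intro n; rw [hterm n]; ring
      rw [tsum_congr this, Summable.tsum_add (hT.mul_left V) ha_sum, tsum_mul_left]
    · refine hsum_int.congr fun n => ?_
      rw [← hterm n]
      refine (integral_congr_ae (Filter.Eventually.of_forall fun y => ?_)).symm
      exact Real.norm_of_nonneg (hF_nonneg n y)
  -- bound on g
  obtain ⟨x₀, -, hx₀⟩ := isCompact_univ.exists_isMaxOn Set.univ_nonempty hgc.continuousOn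
  set C : ℝ := ∑' n, ‖φ n x₀‖ ^ 2 * a n with hC
  have hfb : ∀ y : M, f y ≤ 2 * B + 2 * C := by
    intro y
    calc f y ≤ ∑' n, (2 * (‖T n‖ ^ 2 * a n) + 2 * (‖φ n y‖ ^ 2 * a n)) :=
          Summable.tsum_le_tsum (fun n => hptb n y) (hpt y)
            ((hT.mul_left 2).add ((hsummable y).mul_left 2))
      _ = 2 * B + 2 * (∑' n, ‖φ n y‖ ^ 2 * a n) := by
          rw [Summable.tsum_add (hT.mul_left 2) ((hsummable y).mul_left 2),
            tsum_mul_left, tsum_mul_left]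
      _ ≤ 2 * B + 2 * C := by
          have := hx₀ (Set.mem_univ y)
          simp only [Set.mem_setOf_eq] at this
          linarith
  -- measurability and integrability of f
  have hfmeas : Measurable f := by
    apply measurable_of_tendsto_metrizable
      (f := fun s : ℕ => fun y : M => ∑ n ∈ Finset.range s, F n y)
      (fun s => (continuous_finset_sum _ fun n _ => hFcont n).measurable)
    rw [tendsto_pi_nhds]
    exact fun y => ((hpt y).hasSum.tendsto_sum_nat)
  have hf_nonneg : ∀ y, 0 ≤ f y := fun y => tsum_nonneg fun n => hF_nonneg n y
  have hfint : Integrable f μ := by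
    refine (integrable_const (2 * B + 2 * C)).mono' hfmeas.aestronglyMeasurable
      (Filter.Eventually.of_forall fun y => ?_)
    rw [Real.norm_of_nonneg (hf_nonneg y)]
    exact hfb y
  obtain ⟨y, hy⟩ := MeasureTheory.exists_le_average hμ0 hfint
  refine ⟨y, ?_⟩
  have havg : ⨍ x, f x ∂μ = B + A / V := by
    rw [average_eq, hI, measureReal_def, ← hV, smul_eq_mul]
    field_simp
  calc f y ≤ ⨍ x, f x ∂μ := hy
    _ = B + A / V := havg

/-- In the setting of Statement 4, if `(p₁, …, p_N)` globally minimizes `F_N`,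
then for every fixed index `m`,
`(1/N) · ‖φₘ(p₁) + ⋯ + φₘ(p_N)‖ ≤ C(m)/√N` where `C(m) = √((1/(V·aₘ)) · Σₙ aₙ)`. -/
theorem avg_bound_of_min {M : Type*} [TopologicalSpace M] [CompactSpace M]
    [MeasurableSpace M] [BorelSpace M] (μ : Measure M) [IsFiniteMeasure μ]
    (V : ℝ) (hV : V = (μ Set.univ).toReal) (hVpos : 0 < V)
    (φ : ℕ → M → ℂ) (hφ : ∀ n, Continuous (φ n))
    (hmean : ∀ n, ∫ x, φ n x ∂μ = 0) (hnorm : ∀ n, ∫ x, ‖φ n x‖ ^ 2 ∂μ = 1)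
    (a : ℕ → ℝ) (ha : ∀ n, 0 < a n)
    (hsummable : ∀ x : M, Summable fun n => ‖φ n x‖ ^ 2 * a n)
    (hunif : TendstoUniformly
      (fun s : ℕ => fun x : M => ∑ n ∈ Finset.range s, ‖φ n x‖ ^ 2 * a n)
      (fun x : M => ∑' n, ‖φ n x‖ ^ 2 * a n) Filter.atTop)
    (N : ℕ) (hN : 1 ≤ N) (p : Fin N → M)
    (hmin : ∀ x : Fin N → M,
      (∑' n, ‖∑ i, φ n (p i)‖ ^ 2 * a n) ≤ ∑' n, ‖∑ i, φ n (x i)‖ ^ 2 * a n)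
    (m : ℕ) :
    (1 / (N : ℝ)) * ‖∑ i, φ m (p i)‖
      ≤ Real.sqrt ((1 / (V * a m)) * ∑' n, a n) / Real.sqrt N := by
  have hμ0 : μ ≠ 0 := by
    intro h
    rw [h] at hV
    simp at hV
    exact absurd hV hVpos.ne'
  have hgc : Continuous fun x : M => ∑' n, ‖φ n x‖ ^ 2 * a n :=
    hunif.continuous (Filter.Frequently.of_forall fun s =>
      continuous_finset_sum _ fun n _ => ((hφ n).norm.pow 2).mul continuous_const)
  have ha_sum : Summable a := a_summable μ hμ0 φ hφ hnorm a ha hsummable hgc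
  set A : ℝ := ∑' n, a n with hA
  have hA0 : 0 ≤ A := tsum_nonneg fun n => (ha n).le
  -- greedy construction
  have key : ∀ k : ℕ, ∃ q : Fin k → M,
      (∑' n, ‖∑ i, φ n (q i)‖ ^ 2 * a n) ≤ k * A / V := by
    intro k
    induction k with
    | zero =>
      refine ⟨fun i => i.elim0, ?_⟩
      simp
    | succ k ih =>
      obtain ⟨q, hq⟩ := ih
      obtain ⟨y, hy⟩ := step_lemma μ V hV hVpos φ hφ hmean hnorm a ha hsummable hgc
        ha_sum (fun n => ∑ i, φ n (q i)) (tuple_summable φ a ha hsummable q)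
      refine ⟨Fin.snoc q y, ?_⟩
      have hsum_eq : ∀ n, ∑ i : Fin (k + 1), φ n ((Fin.snoc q y : Fin (k + 1) → M) i)
          = (∑ i, φ n (q i)) + φ n y := by
        intro n
        rw [Fin.sum_univ_castSucc]
        simp
      calc ∑' n, ‖∑ i : Fin (k + 1), φ n ((Fin.snoc q y : Fin (k + 1) → M) i)‖ ^ 2 * a n
          = ∑' n, ‖(∑ i, φ n (q i)) + φ n y‖ ^ 2 * a n :=
            tsum_congr fun n => by rw [hsum_eq n]
        _ ≤ (∑' n, ‖∑ i, φ n (q i)‖ ^ 2 * a n) + A / V := hy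
        _ ≤ k * A / V + A / V := add_le_add_left hq _
        _ = (k + 1 : ℕ) * A / V := by push_cast; ring
  obtain ⟨q, hq⟩ := key N
  have hFp : (∑' n, ‖∑ i, φ n (p i)‖ ^ 2 * a n) ≤ N * A / V := le_trans (hmin q) hq
  have htm : ‖∑ i, φ m (p i)‖ ^ 2 * a m ≤ ∑' n, ‖∑ i, φ n (p i)‖ ^ 2 * a n :=
    Summable.le_tsum (tuple_summable φ a ha hsummable p) m
      (fun j _ => mul_nonneg (by positivity) (ha j).le)
  set S : ℝ := ‖∑ i, φ m (p i)‖ with hS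
  have hS0 : 0 ≤ S := norm_nonneg _
  have hNpos : (0 : ℝ) < N := by exact_mod_cast Nat.lt_of_lt_of_le Nat.zero_lt_one hN
  set c : ℝ := (1 / (V * a m)) * A with hc
  have hVam : 0 < V * a m := mul_pos hVpos (ha m)
  have hc0 : 0 ≤ c := mul_nonneg (le_of_lt (one_div_pos.mpr hVam)) hA0
  have hS2 : S ^ 2 ≤ N * c := by
    have h1 : S ^ 2 * a m ≤ N * A / V := le_trans htm hFp
    have h2 : S ^ 2 * a m * V ≤ N * A := by
      rw [← le_div_iff₀ hVpos]
      exact h1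
    rw [hc, show (N : ℝ) * (1 / (V * a m) * A) = N * A / (V * a m) by
      field_simp, le_div_iff₀ hVam]
    calc S ^ 2 * (V * a m) = S ^ 2 * a m * V := by ring
      _ ≤ N * A := h2
  have hSle : S ≤ Real.sqrt N * Real.sqrt c := by
    rw [← Real.sqrt_mul hNpos.le]
    exact (Real.le_sqrt hS0 (mul_nonneg hNpos.le hc0)).mpr hS2
  have hsqN : Real.sqrt N * Real.sqrt N = N := Real.mul_self_sqrt hNpos.le
  have hsqNpos : 0 < Real.sqrt N := Real.sqrt_pos.mpr hNpos
  have heq : Real.sqrt c / Real.sqrt N = (1 / N) * (Real.sqrt N * Real.sqrt c) := by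
    rw [div_eq_iff hsqNpos.ne']
    field_simp
    nlinarith [hsqN, Real.sqrt_nonneg c]
  rw [heq]
  have := mul_le_mul_of_nonneg_left hSle (le_of_lt (by positivity : (0:ℝ) < 1 / N))
  exact this
end

section
/- Let M be a compact topological space with a finite Borel measure μ of total mass V = μ(M) > 0. Let φ₁, φ₂, … : M → ℂ be continuous functions, each with ∫_M φₙ dμ = 0 and ∫_M |φₙ|² dμ = 1, such that the linear span of the constant function 1 together with the functions φ₁, φ₂, … is dense in C(M; ℂ) with respect to the sup norm. Let a₁, a₂, … be positive reals such that the series Σₙ |φₙ(x)|² aₙ converges uniformly on M. For each N = 1, 2, 3, … suppose X_N = (x₁^{(N)}, …, x_N^{(N)}) ∈ M^N globally minimizes the function F_N(x₁, …, x_N) = Σ_{n=1}^∞ |φₙ(x₁) + ⋯ + φₙ(x_N)|² aₙ on M^N. Then the tuples X_N become equidistributed with respect to μ/V: for every continuous function f : M → ℂ, (1/N) · Σ_{i=1}^N f(x_i^{(N)}) → (1/V) ∫_M f dμ as N → ∞. -/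
open MeasureTheory Filter

/-- main theorem: On a compact space `M` with a finite Borel measure `μ` of
total mass `V = μ(M) > 0`, let `φₙ ∈ C(M; ℂ)` have `∫ φₙ = 0` and `∫ ‖φₙ‖² = 1`, with the
span of `1` and the `φₙ` sup-norm dense in `C(M; ℂ)`, and let `aₙ > 0` be such that
`Σₙ ‖φₙ(x)‖² aₙ` converges uniformly on `M`. If for each `N` the tuple
`X_N ∈ M^N` globally minimizes `F_N(x₁, …, x_N) = Σₙ ‖φₙ(x₁) + ⋯ + φₙ(x_N)‖² aₙ`, then the
`X_N` become equidistributed with respect to `μ/V`: for every continuous `f : M → ℂ`,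
`(1/N) Σᵢ f(xᵢ⁽ᴺ⁾) → (1/V) ∫ f dμ` as `N → ∞`. -/
theorem equidistribution_of_minimizers {M : Type*} [TopologicalSpace M] [CompactSpace M]
    [MeasurableSpace M] [BorelSpace M] (μ : Measure M) [IsFiniteMeasure μ]
    (V : ℝ) (hV : V = (μ Set.univ).toReal) (hVpos : 0 < V)
    (φ : ℕ → C(M, ℂ))
    (hmean : ∀ n, ∫ x, φ n x ∂μ = 0) (hnorm : ∀ n, ∫ x, ‖φ n x‖ ^ 2 ∂μ = 1)
    (hdense : Dense
      ((Submodule.span ℂ (insert (1 : C(M, ℂ)) (Set.range φ)) : Submodule ℂ C(M, ℂ)) :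
        Set C(M, ℂ)))
    (a : ℕ → ℝ) (ha : ∀ n, 0 < a n)
    (hsummable : ∀ x : M, Summable fun n => ‖φ n x‖ ^ 2 * a n)
    (hunif : TendstoUniformly
      (fun s : ℕ => fun x : M => ∑ n ∈ Finset.range s, ‖φ n x‖ ^ 2 * a n)
      (fun x : M => ∑' n, ‖φ n x‖ ^ 2 * a n) Filter.atTop)
    (X : (N : ℕ) → Fin N → M)
    (hmin : ∀ N : ℕ, ∀ x : Fin N → M,
      (∑' n, ‖∑ i, φ n (X N i)‖ ^ 2 * a n) ≤ ∑' n, ‖∑ i, φ n (x i)‖ ^ 2 * a n) :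
    ∀ f : C(M, ℂ), Tendsto (fun N : ℕ => (1 / (N : ℂ)) * ∑ i, f (X N i))
      atTop (nhds ((1 / (V : ℂ)) * ∫ x, f x ∂μ)) := by
  classical
  -- Basic setup
  have hVne' : V ≠ 0 := ne_of_gt hVpos
  have hμ0 : μ ≠ 0 := by
    intro h
    rw [hV, h] at hVpos; simp at hVpos
  -- integrability of continuous functions
  have hintR : ∀ g : M → ℝ, Continuous g → Integrable g μ := fun g hg =>
    hg.integrable_of_hasCompactSupport (HasCompactSupport.of_compactSpace g)
  have hintC : ∀ g : M → ℂ, Continuous g → Integrable g μ := fun g hg =>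
    hg.integrable_of_hasCompactSupport (HasCompactSupport.of_compactSpace g)
  -- the limit function T of the uniformly convergent series is continuous, hence bounded
  set T : M → ℝ := fun x => ∑' n, ‖φ n x‖ ^ 2 * a n with hT
  have hpscont : ∀ s : Finset ℕ, Continuous fun x => ∑ n ∈ s, ‖φ n x‖ ^ 2 * a n :=
    fun s => continuous_finset_sum _ fun n _ => ((φ n).continuous.norm.pow 2).mul continuous_const
  have hTcont : Continuous T :=
    hunif.continuous (Filter.Eventually.frequently (Filter.Eventually.of_forall fun s => hpscont _))
  obtain ⟨CT, hCT⟩ : ∃ CT : ℝ, ∀ x, T x ≤ CT := by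
    rcases isEmpty_or_nonempty M with h | h
    · exact ⟨0, fun x => (IsEmpty.false x).elim⟩
    obtain ⟨x₀, _, hx₀⟩ := isCompact_univ.exists_isMaxOn Set.univ_nonempty hTcont.continuousOn
    exact ⟨T x₀, fun x => hx₀ (Set.mem_univ x)⟩
  -- ∫ ‖φ n x‖^2 * a n = a n
  have hint_term : ∀ n, ∫ x, ‖φ n x‖ ^ 2 * a n ∂μ = a n := by
    intro n
    rw [integral_mul_const, hnorm n, one_mul]
  -- a is summable
  have hsummA : Summable a := by
    refine summable_of_sum_range_le (c := V * CT) (fun n => (ha n).le) fun s => ?_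
    have h1 : ∑ n ∈ Finset.range s, a n = ∫ x, ∑ n ∈ Finset.range s, ‖φ n x‖ ^ 2 * a n ∂μ := by
      rw [integral_finset_sum _ fun n _ =>
        hintR (fun x => ‖φ n x‖ ^ 2 * a n) (((φ n).continuous.norm.pow 2).mul continuous_const)]
      exact (Finset.sum_congr rfl fun n _ => (hint_term n).symm)
    rw [h1]
    calc ∫ x, ∑ n ∈ Finset.range s, ‖φ n x‖ ^ 2 * a n ∂μ
        ≤ ∫ _x, CT ∂μ := by
          refine integral_mono (hintR _ (hpscont _)) (integrable_const _) fun x => ?_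
          exact le_trans (Summable.sum_le_tsum _ (fun n _ => mul_nonneg (pow_nonneg (norm_nonneg _) 2) (ha n).le) (hsummable x)) (hCT x)
      _ = V * CT := by rw [integral_const, smul_eq_mul, hV, measureReal_def]
  set A : ℝ := ∑' n, a n with hA
  have hAnn : 0 ≤ A := tsum_nonneg fun n => (ha n).le
  -- summability of the series at any tuple
  have hsum_S : ∀ {N : ℕ} (y : Fin N → M), Summable fun n => ‖∑ i, φ n (y i)‖ ^ 2 * a n := by
    intro N y
    refine Summable.of_nonneg_of_le (fun n => mul_nonneg (pow_nonneg (norm_nonneg _) 2) (ha n).le)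
      (fun n => ?_) (((summable_sum fun i (_ : i ∈ Finset.univ) =>
        hsummable (y i))).mul_left (N : ℝ))
    have h1 : ‖∑ i, φ n (y i)‖ ≤ ∑ i, ‖φ n (y i)‖ := norm_sum_le _ _
    have h2 : (∑ i, ‖φ n (y i)‖) ^ 2 ≤ (N : ℝ) * ∑ i, ‖φ n (y i)‖ ^ 2 := by
      simpa using (sq_sum_le_card_mul_sum_sq (s := (Finset.univ : Finset (Fin N)))
        (f := fun i => ‖φ n (y i)‖))
    have h3 : ‖∑ i, φ n (y i)‖ ^ 2 ≤ (N : ℝ) * ∑ i, ‖φ n (y i)‖ ^ 2 :=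
      le_trans (by exact pow_le_pow_left₀ (norm_nonneg _) h1 2) h2
    calc ‖∑ i, φ n (y i)‖ ^ 2 * a n ≤ ((N : ℝ) * ∑ i, ‖φ n (y i)‖ ^ 2) * a n :=
          mul_le_mul_of_nonneg_right h3 (ha n).le
      _ = (N : ℝ) * ∑ i, ‖φ n (y i)‖ ^ 2 * a n := by rw [mul_assoc, Finset.sum_mul]
  -- the one-point integral identity
  have hint_one : ∀ (S : ℂ) (n : ℕ), ∫ x, ‖S + φ n x‖ ^ 2 ∂μ = ‖S‖ ^ 2 * V + 1 := by
    intro S n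
    have hexp : ∀ x : M, ‖S + φ n x‖ ^ 2
        = ‖S‖ ^ 2 + (2 * (S * (starRingEnd ℂ) (φ n x)).re + ‖φ n x‖ ^ 2) := by
      intro x
      rw [Complex.sq_norm,
        Complex.sq_norm, Complex.sq_norm, Complex.normSq_add]
      ring
    have hi1 : Integrable (fun x => 2 * (S * (starRingEnd ℂ) (φ n x)).re + ‖φ n x‖ ^ 2) μ := by
      refine Integrable.add ?_ (hintR _ ((φ n).continuous.norm.pow 2))
      refine Integrable.const_mul ?_ 2
      exact hintR _ (Complex.continuous_re.comp
        (continuous_const.mul (Complex.continuous_conj.comp (φ n).continuous)))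
    have hi2 : Integrable (fun x => (S * (starRingEnd ℂ) (φ n x)).re) μ :=
      hintR _ (Complex.continuous_re.comp
        (continuous_const.mul (Complex.continuous_conj.comp (φ n).continuous)))
    have hi3 : Integrable (fun x => S * (starRingEnd ℂ) (φ n x)) μ :=
      hintC _ (continuous_const.mul (Complex.continuous_conj.comp (φ n).continuous))
    calc ∫ x, ‖S + φ n x‖ ^ 2 ∂μ
        = ∫ x, (‖S‖ ^ 2 + (2 * (S * (starRingEnd ℂ) (φ n x)).re + ‖φ n x‖ ^ 2)) ∂μ := by
          exact integral_congr_ae (Filter.Eventually.of_forall hexp)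
      _ = ‖S‖ ^ 2 * V + (2 * ∫ x, (S * (starRingEnd ℂ) (φ n x)).re ∂μ + 1) := by
          rw [integral_add (integrable_const _) hi1, integral_const, smul_eq_mul, measureReal_def, ← hV,
            integral_add (hi2.const_mul 2) (hintR (fun x => ‖φ n x‖ ^ 2) ((φ n).continuous.norm.pow 2)),
            integral_const_mul, hnorm n]
          ring
      _ = ‖S‖ ^ 2 * V + 1 := by
          have : ∫ x, (S * (starRingEnd ℂ) (φ n x)).re ∂μ = 0 := by
            have h1 : ∫ x, (S * (starRingEnd ℂ) (φ n x)).re ∂μ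
                = (∫ x, S * (starRingEnd ℂ) (φ n x) ∂μ).re := by
              simpa using integral_re (μ := μ) (𝕜 := ℂ) hi3
            rw [h1, integral_const_mul, integral_conj, hmean n]
            simp
          rw [this]; ring
  -- KEY: averaging argument producing a good extra point
  have hkey : ∀ (N : ℕ) (y : Fin N → M), ∃ x : M,
      (∑' n, ‖(∑ i, φ n (y i)) + φ n x‖ ^ 2 * a n)
        ≤ (∑' n, ‖∑ i, φ n (y i)‖ ^ 2 * a n) + A / V := by
    intro N y
    set S : ℕ → ℂ := fun n => ∑ i, φ n (y i) with hS
    set F : ℝ := ∑' n, ‖S n‖ ^ 2 * a n with hF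
    set c : ℝ := F + A / V with hc
    set g : ℕ → M → ℝ := fun n x => ‖S n + φ n x‖ ^ 2 * a n with hg
    have hgcont : ∀ n, Continuous (g n) := fun n =>
      (((continuous_const.add (φ n).continuous).norm.pow 2).mul continuous_const)
    have hgnn : ∀ n x, 0 ≤ g n x := fun n x => mul_nonneg (pow_nonneg (norm_nonneg _) 2) (ha n).le
    -- the integral of each partial sum is at most c * V
    have hpartial : ∀ s : ℕ, ∫ x, ∑ n ∈ Finset.range s, g n x ∂μ ≤ c * V := by
      intro s
      rw [integral_finset_sum _ fun n _ => hintR _ (hgcont n)]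
      have heach : ∀ n, ∫ x, g n x ∂μ = ‖S n‖ ^ 2 * a n * V + a n := by
        intro n
        rw [hg]
        simp only
        rw [integral_mul_const, hint_one (S n) n]
        ring
      have : ∑ n ∈ Finset.range s, ∫ x, g n x ∂μ
          = (∑ n ∈ Finset.range s, ‖S n‖ ^ 2 * a n) * V + ∑ n ∈ Finset.range s, a n := by
        rw [Finset.sum_mul, ← Finset.sum_add_distrib]
        exact Finset.sum_congr rfl fun n _ => heach n
      rw [this]
      have h1 : ∑ n ∈ Finset.range s, ‖S n‖ ^ 2 * a n ≤ F :=
        Summable.sum_le_tsum _ (fun n _ => mul_nonneg (pow_nonneg (norm_nonneg _) 2) (ha n).le) (hsum_S y)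
      have h2 : ∑ n ∈ Finset.range s, a n ≤ A :=
        Summable.sum_le_tsum _ (fun n _ => (ha n).le) hsummA
      have : c * V = F * V + A := by
        rw [hc]; field_simp
      rw [this]
      have := mul_le_mul_of_nonneg_right h1 hVpos.le
      linarith
    -- nested nonempty compact closed sets
    set K : ℕ → Set M := fun s => {x | ∑ n ∈ Finset.range s, g n x ≤ c} with hK
    have hKcl : ∀ s, IsClosed (K s) := fun s =>
      isClosed_le (continuous_finset_sum _ fun n _ => hgcont n) continuous_const
    have hKmono : ∀ s, K (s + 1) ⊆ K s := by
      intro s x hx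
      have : ∑ n ∈ Finset.range s, g n x ≤ ∑ n ∈ Finset.range (s + 1), g n x :=
        Finset.sum_le_sum_of_subset_of_nonneg
          (Finset.range_subset_range.mpr (Nat.le_succ s)) fun n _ _ => hgnn n x
      exact le_trans this hx
    have hKne : ∀ s, (K s).Nonempty := by
      intro s
      obtain ⟨x, hx⟩ := exists_le_average (f := fun x => ∑ n ∈ Finset.range s, g n x) hμ0
        (hintR _ (continuous_finset_sum _ fun n _ => hgcont n))
      refine ⟨x, ?_⟩
      have havg : ⨍ x, ∑ n ∈ Finset.range s, g n x ∂μ ≤ c := by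
        rw [average_eq, smul_eq_mul, measureReal_def, ← hV]
        have h0 : (0 : ℝ) ≤ V⁻¹ := inv_nonneg.mpr hVpos.le
        calc V⁻¹ * ∫ x, ∑ n ∈ Finset.range s, g n x ∂μ
            ≤ V⁻¹ * (c * V) := mul_le_mul_of_nonneg_left (hpartial s) h0
          _ = c := by field_simp
      exact le_trans hx havg
    obtain ⟨x₀, hx₀⟩ := IsCompact.nonempty_iInter_of_sequence_nonempty_isCompact_isClosed
      K hKmono hKne ((hKcl 0).isCompact) hKcl
    refine ⟨x₀, ?_⟩
    refine Real.tsum_le_of_sum_range_le (fun n => hgnn n x₀) fun s => ?_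
    exact (Set.mem_iInter.mp hx₀ s :)
  -- the minimal value is at most N * (A / V)
  have hm : ∀ N : ℕ, (∑' n, ‖∑ i, φ n (X N i)‖ ^ 2 * a n) ≤ N * (A / V) := by
    intro N
    induction N with
    | zero =>
      simp
    | succ N ih =>
      obtain ⟨x₀, hx₀⟩ := hkey N (X N)
      set y : Fin (N + 1) → M := Fin.snoc (X N) x₀ with hy
      have hsum_eq : ∀ n, ∑ i, φ n (y i) = (∑ i, φ n (X N i)) + φ n x₀ := by
        intro n
        rw [Fin.sum_univ_castSucc]
        simp [hy]
      have h1 := hmin (N + 1) y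
      have h2 : (∑' n, ‖∑ i, φ n (y i)‖ ^ 2 * a n)
          ≤ (∑' n, ‖∑ i, φ n (X N i)‖ ^ 2 * a n) + A / V := by
        refine le_trans (le_of_eq ?_) hx₀
        exact tsum_congr fun n => by rw [hsum_eq n]
      have hAV : 0 ≤ A / V := div_nonneg hAnn hVpos.le
      calc (∑' n, ‖∑ i, φ n (X (N + 1) i)‖ ^ 2 * a n)
          ≤ (∑' n, ‖∑ i, φ n (X N i)‖ ^ 2 * a n) + A / V := le_trans h1 h2
        _ ≤ N * (A / V) + A / V := by linarith
        _ = (N + 1 : ℕ) * (A / V) := by push_cast; ring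
  -- per-frequency bound and convergence for each φ n
  have hφlim : ∀ n : ℕ, Tendsto (fun N : ℕ => (1 / (N : ℂ)) * ∑ i, φ n (X N i))
      atTop (nhds 0) := by
    intro n
    rw [tendsto_zero_iff_norm_tendsto_zero]
    set K : ℝ := (A / V) / a n with hKdef
    have hKnn : 0 ≤ K := div_nonneg (div_nonneg hAnn hVpos.le) (ha n).le
    have hbound : ∀ N : ℕ, ‖(1 / (N : ℂ)) * ∑ i, φ n (X N i)‖ ≤ Real.sqrt (K / N) := by
      intro N
      rcases Nat.eq_zero_or_pos N with h0 | hNpos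
      · subst h0; simp
      have hNR : (0 : ℝ) < N := by exact_mod_cast hNpos
      have hS2 : ‖∑ i, φ n (X N i)‖ ^ 2 ≤ N * K := by
        have h1 : ‖∑ i, φ n (X N i)‖ ^ 2 * a n ≤ N * (A / V) :=
          le_trans (Summable.le_tsum (hsum_S (X N)) n fun m _ => mul_nonneg (pow_nonneg (norm_nonneg _) 2) (ha m).le) (hm N)
        rw [hKdef, ← mul_div_assoc]
        exact (le_div_iff₀ (ha n)).mpr h1
      have hnorm1 : ‖(1 / (N : ℂ)) * ∑ i, φ n (X N i)‖
          = (1 / (N : ℝ)) * ‖∑ i, φ n (X N i)‖ := by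
        rw [norm_mul]
        congr 1
        simp
      rw [hnorm1]
      rw [Real.le_sqrt (by positivity) (by positivity)]
      rw [mul_pow]
      calc (1 / (N : ℝ)) ^ 2 * ‖∑ i, φ n (X N i)‖ ^ 2
          ≤ (1 / (N : ℝ)) ^ 2 * (N * K) := by
            exact mul_le_mul_of_nonneg_left hS2 (by positivity)
        _ = K / N := by field_simp
    refine squeeze_zero (fun N => norm_nonneg _) hbound ?_
    have h1 : Tendsto (fun N : ℕ => K / (N : ℝ)) atTop (nhds 0) :=
      tendsto_const_div_atTop_nhds_zero_nat K
    have h2 : Tendsto Real.sqrt (nhds 0) (nhds 0) := by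
      have := Real.continuous_sqrt.tendsto 0
      simpa using this
    exact h2.comp h1
  -- convergence for each element of the spanning set and hence of the span
  set L : ℕ → C(M, ℂ) → ℂ := fun N f => (1 / (N : ℂ)) * ∑ i, f (X N i) with hL
  set Lam : C(M, ℂ) → ℂ := fun f => (1 / (V : ℂ)) * ∫ x, f x ∂μ with hLam
  have hspan : ∀ f ∈ Submodule.span ℂ (insert (1 : C(M, ℂ)) (Set.range φ)),
      Tendsto (fun N => L N f) atTop (nhds (Lam f)) := by
    intro f hf
    induction hf using Submodule.span_induction with
    | mem f hfmem =>
      rcases hfmem with h1 | ⟨n, rfl⟩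
      · -- f = 1
        subst h1
        have hval : Lam (1 : C(M, ℂ)) = 1 := by
          simp only [hLam, ContinuousMap.one_apply]
          rw [integral_const, Complex.real_smul, mul_one, measureReal_def, ← hV, one_div, inv_mul_cancel₀]
          exact Complex.ofReal_ne_zero.mpr hVne'
        rw [hval]
        have hev : ∀ᶠ N : ℕ in atTop, L N (1 : C(M, ℂ)) = 1 := by
          filter_upwards [eventually_ge_atTop 1] with N hN
          simp only [hL, ContinuousMap.one_apply, Finset.sum_const, Finset.card_univ,
            Fintype.card_fin, nsmul_eq_mul, mul_one]
          rw [one_div, inv_mul_cancel₀]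
          exact_mod_cast Nat.cast_ne_zero.mpr (by omega)
        exact tendsto_const_nhds.congr' (hev.mono fun N h => h.symm)
      · -- f = φ n
        have h0 : Lam (φ n) = 0 := by
          rw [hLam]
          simp only
          rw [show (∫ x, (φ n) x ∂μ) = 0 from hmean n, mul_zero]
        rw [h0]
        exact hφlim n
    | zero =>
      have : (fun N => L N (0 : C(M, ℂ))) = fun _ => 0 := by
        funext N; simp [hL]
      rw [this]
      have : Lam (0 : C(M, ℂ)) = 0 := by simp [hLam]
      rw [this]
      exact tendsto_const_nhds
    | add f g hfm hgm hft hgt =>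
      have h1 : (fun N => L N (f + g)) = fun N => L N f + L N g := by
        funext N
        simp only [hL, ContinuousMap.add_apply, Finset.sum_add_distrib, mul_add]
      have h2 : Lam (f + g) = Lam f + Lam g := by
        simp only [hLam, ContinuousMap.add_apply]
        rw [integral_add (hintC _ f.continuous) (hintC _ g.continuous), mul_add]
      rw [h1, h2]
      exact hft.add hgt
    | smul c f hfm hft =>
      have h1 : (fun N => L N (c • f)) = fun N => c * L N f := by
        funext N
        simp only [hL, ContinuousMap.smul_apply, smul_eq_mul]
        rw [← Finset.mul_sum]
        ring
      have h2 : Lam (c • f) = c * Lam f := by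
        simp only [hLam, ContinuousMap.smul_apply]
        rw [integral_smul, smul_eq_mul]
        ring
      rw [h1, h2]
      exact hft.const_mul c
  -- approximation argument
  intro f
  have hmain : Tendsto (fun N => L N f) atTop (nhds (Lam f)) := by
    rw [Metric.tendsto_atTop]
    intro ε hε
    obtain ⟨g, hgball, hgmem⟩ :=
      Metric.dense_iff.mp hdense f (ε / 3) (by linarith)
    have hgf : dist f g < ε / 3 := by
      rw [dist_comm]; exact Metric.mem_ball.mp hgball
    have hgt := hspan g hgmem
    rw [Metric.tendsto_atTop] at hgt
    obtain ⟨N₀, hN₀⟩ := hgt (ε / 3) (by linarith)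
    refine ⟨N₀, fun N hN => ?_⟩
    -- three-term triangle inequality
    have key1 : dist (L N f) (L N g) ≤ dist f g := by
      have : L N f - L N g = (1 / (N : ℂ)) * ∑ i, (f (X N i) - g (X N i)) := by
        simp only [hL, Finset.sum_sub_distrib, mul_sub]
      rw [dist_eq_norm, this, norm_mul]
      have hns : ‖∑ i, (f (X N i) - g (X N i))‖ ≤ N * dist f g := by
        refine le_trans (norm_sum_le _ _) ?_
        have : ∀ i : Fin N, ‖f (X N i) - g (X N i)‖ ≤ dist f g := by
          intro i
          rw [dist_eq_norm]
          exact le_trans (le_of_eq (by simp)) (ContinuousMap.norm_coe_le_norm (f - g) (X N i))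
        calc ∑ i : Fin N, ‖f (X N i) - g (X N i)‖ ≤ ∑ _i : Fin N, dist f g :=
              Finset.sum_le_sum fun i _ => this i
          _ = N * dist f g := by simp [mul_comm]
      have hn1 : ‖(1 / (N : ℂ))‖ = 1 / (N : ℝ) := by simp
      rw [hn1]
      rcases Nat.eq_zero_or_pos N with h0 | hNpos
      · subst h0; simp [dist_nonneg]
      have hNR : (0 : ℝ) < N := by exact_mod_cast hNpos
      calc (1 / (N : ℝ)) * ‖∑ i, (f (X N i) - g (X N i))‖
          ≤ (1 / (N : ℝ)) * (N * dist f g) := by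
            exact mul_le_mul_of_nonneg_left hns (by positivity)
        _ = dist f g := by field_simp
    have key2 : dist (Lam g) (Lam f) ≤ dist f g := by
      have : Lam g - Lam f = (1 / (V : ℂ)) * ∫ x, (g x - f x) ∂μ := by
        simp only [hLam]
        rw [integral_sub (hintC _ g.continuous) (hintC _ f.continuous), mul_sub]
      rw [dist_eq_norm, this, norm_mul]
      have hn1 : ‖(1 / (V : ℂ))‖ = 1 / V := by
        simp [abs_of_pos hVpos]
      have hni : ‖∫ x, (g x - f x) ∂μ‖ ≤ dist f g * V := by
        refine le_trans (norm_integral_le_integral_norm _) ?_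
        have hle : ∀ x, ‖g x - f x‖ ≤ dist f g := by
          intro x
          rw [dist_comm, dist_eq_norm]
          exact le_trans (le_of_eq (by simp)) (ContinuousMap.norm_coe_le_norm (g - f) x)
        calc ∫ x, ‖g x - f x‖ ∂μ ≤ ∫ _x, dist f g ∂μ :=
              integral_mono (hintR _ (g.continuous.sub f.continuous).norm)
                (integrable_const _) hle
          _ = dist f g * V := by rw [integral_const, smul_eq_mul, measureReal_def, ← hV, mul_comm]
      rw [hn1]
      calc (1 / V) * ‖∫ x, (g x - f x) ∂μ‖ ≤ (1 / V) * (dist f g * V) :=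
            mul_le_mul_of_nonneg_left hni (by positivity)
        _ = dist f g := by field_simp
    calc dist (L N f) (Lam f)
        ≤ dist (L N f) (L N g) + dist (L N g) (Lam g) + dist (Lam g) (Lam f) :=
          dist_triangle4 _ _ _ _
      _ < ε / 3 + ε / 3 + ε / 3 := by
          have := hN₀ N hN
          have h1 : dist (L N f) (L N g) < ε / 3 := lt_of_le_of_lt key1 hgf
          have h2 : dist (Lam g) (Lam f) < ε / 3 := lt_of_le_of_lt key2 hgf
          linarith
      _ = ε := by ring
  exact hmain
end
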